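/- Let a be a real number. For s ∈ (1,2) define t(s) = s³(2−s)/(2s−1) and τ̃(s) = s^{−6a²+1/12}·(s−1)^{−6a²+1/12}·(s+1)^{2a²}·(2−s)^{2a²}·(2s−1)^{5a²−1/16} (real powers of positive real bases). Define σ̃(s) = t(s)(t(s)−1)·(τ̃'(s)/τ̃(s))/t'(s). Then for every s ∈ (1,2) at which t'(s) ≠ 0, writing u = t(s), σ = σ̃(s), σ' = σ̃'(s)/t'(s), and σ'' = (d/ds)(σ̃'(s)/t'(s)) / t'(s), one has (u(u−1)σ'')² = −2·det of the 3×3 matrix with rows (2θ_0², uσ'−σ, σ'+θ_0²+θ_t²+θ_1²−θ_∞²), (uσ'−σ, 2θ_t², (u−1)σ'−σ), (σ'+θ_0²+θ_t²+θ_1²−θ_∞², (u−1)σ'−σ, 2θ_1²), with (θ_0,θ_t,θ_1,θ_∞) = (a, a, a, 1/4); i.e. the algebraic tau function τ̃(s) solves the σ-form of Painlevé VI along the parametrization t = t(s). -/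

import Mathlib

open Set

/-- derivative of the parametrization `t(s)` -/
noncomputable def PVI_Dt (x : ℝ) : ℝ := -6 * x ^ 2 * (x - 1) ^ 2 / (2 * x - 1) ^ 2

/-- logarithmic derivative of the tau function -/
noncomputable def PVI_L (a x : ℝ) : ℝ :=
  (-6 * a ^ 2 + 1 / 12) * (1 / x + 1 / (x - 1)) +
    2 * a ^ 2 * (1 / (x + 1) - 1 / (2 - x)) + (10 * a ^ 2 - 1 / 8) / (2 * x - 1)

/-- closed form of `σ(s)` -/
noncomputable def PVI_G (a x : ℝ) : ℝ :=
  ((1 / 36 - 2 * a ^ 2) + (-1 / 18 + 4 * a ^ 2) * x + (1 / 48 - 3 * a ^ 2) * x ^ 2 +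
    (5 / 72 - 2 * a ^ 2) * x ^ 3 + (-5 / 144 + a ^ 2) * x ^ 4) / (2 * x - 1)

/-- closed form of `σ'(s)` (derivative in `s`) -/
noncomputable def PVI_Gd (a x : ℝ) : ℝ :=
  ((-1 / 24 + 6 * a ^ 2) * x + (-1 / 6) * x ^ 2 + (5 / 12 - 12 * a ^ 2) * x ^ 3 +
    (-5 / 24 + 6 * a ^ 2) * x ^ 4) / (2 * x - 1) ^ 2

/-- closed form of `dσ/dt` -/
noncomputable def PVI_H (a x : ℝ) : ℝ :=
  -((-1 / 24 + 6 * a ^ 2) * x + (-1 / 6) * x ^ 2 + (5 / 12 - 12 * a ^ 2) * x ^ 3 +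
    (-5 / 24 + 6 * a ^ 2) * x ^ 4) / (6 * x ^ 2 * (x - 1) ^ 2)

/-- closed form of the `s`-derivative of `dσ/dt` -/
noncomputable def PVI_Hd (a x : ℝ) : ℝ :=
  -((-1 / 24 + 6 * a ^ 2) * x + (1 / 8 - 18 * a ^ 2) * x ^ 2 +
    (-1 / 12 + 12 * a ^ 2) * x ^ 3) / (6 * x ^ 3 * (x - 1) ^ 3)

set_option maxHeartbeats 1600000 in
/-- the algebraic Painlevé VI solution IV with parameters
`θ = (a, a, a, 1/4)`: along the parametrization `t(s) = s³(2−s)/(2s−1)`, `s ∈ (1,2)`,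
the tau function `τ̃(s) = s^{−6a²+1/12}(s−1)^{−6a²+1/12}(s+1)^{2a²}(2−s)^{2a²}(2s−1)^{5a²−1/16}`
solves the σ-form of Painlevé VI, with derivatives in `t` computed by the chain rule
(division by `t'(s)`) at points where `t'(s) ≠ 0`. -/
theorem algebraic_solution_IV_sigma_form (a : ℝ)
    (tf τ : ℝ → ℝ)
    (htf : ∀ s ∈ Ioo (1 : ℝ) 2, tf s = s ^ 3 * (2 - s) / (2 * s - 1))
    (hτ : ∀ s ∈ Ioo (1 : ℝ) 2,
      τ s = s ^ (-6 * a ^ 2 + 1 / 12) * (s - 1) ^ (-6 * a ^ 2 + 1 / 12) *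
        (s + 1) ^ (2 * a ^ 2) * (2 - s) ^ (2 * a ^ 2) * (2 * s - 1) ^ (5 * a ^ 2 - 1 / 16))
    (σ : ℝ → ℝ)
    (hσ : ∀ s : ℝ, σ s = tf s * (tf s - 1) * (deriv τ s / τ s) / deriv tf s) :
    ∀ s ∈ Ioo (1 : ℝ) 2, deriv tf s ≠ 0 →
      (fun (u σv σ' σ'' : ℝ) =>
        (u * (u - 1) * σ'') ^ 2 =
          -2 * Matrix.det
            !![2 * a ^ 2, u * σ' - σv,
                σ' + a ^ 2 + a ^ 2 + a ^ 2 - (1 / 4 : ℝ) ^ 2;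
              u * σ' - σv, 2 * a ^ 2, (u - 1) * σ' - σv;
              σ' + a ^ 2 + a ^ 2 + a ^ 2 - (1 / 4 : ℝ) ^ 2,
                (u - 1) * σ' - σv, 2 * a ^ 2])
      (tf s) (σ s) (deriv σ s / deriv tf s)
      (deriv (fun x => deriv σ x / deriv tf x) s / deriv tf s) := by
  have hIopen : IsOpen (Ioo (1 : ℝ) 2) := isOpen_Ioo
  -- derivative of tf on the interval
  have htf' : ∀ x ∈ Ioo (1 : ℝ) 2, HasDerivAt tf (PVI_Dt x) x := by
    intro x hx
    have hx1 : (1 : ℝ) < x := hx.1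
    have h21 : 2 * x - 1 ≠ 0 := by nlinarith
    have h := ((hasDerivAt_pow 3 x).mul ((hasDerivAt_id x).const_sub 2)).div
      (((hasDerivAt_id x).const_mul 2).sub_const 1) h21
    have h2 : HasDerivAt (fun y : ℝ => y ^ 3 * (2 - y) / (2 * y - 1)) (PVI_Dt x) x := by
      refine h.congr_deriv ?_
      simp only [id_eq, Pi.mul_apply, Pi.add_apply, Pi.pow_apply, Pi.neg_apply, Pi.sub_apply]
      unfold PVI_Dt
      field_simp
      ring
    exact h2.congr_of_eventuallyEq (Filter.eventuallyEq_of_mem (hIopen.mem_nhds hx) htf)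
  have hderiv_tf : ∀ x ∈ Ioo (1 : ℝ) 2, deriv tf x = PVI_Dt x := fun x hx =>
    (htf' x hx).deriv
  -- derivative of τ on the interval: logarithmic derivative is PVI_L
  have hLτ : ∀ x ∈ Ioo (1 : ℝ) 2, deriv τ x / τ x = PVI_L a x := by
    intro x hx
    have hx1 : (1 : ℝ) < x := hx.1
    have hx2 : x < 2 := hx.2
    have h0 : (0 : ℝ) < x := by linarith
    have h1 : (0 : ℝ) < x - 1 := by linarith
    have h2 : (0 : ℝ) < x + 1 := by linarith
    have h3 : (0 : ℝ) < 2 - x := by linarith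
    have h4 : (0 : ℝ) < 2 * x - 1 := by linarith
    set c1 : ℝ := -6 * a ^ 2 + 1 / 12 with hc1
    set c2 : ℝ := 2 * a ^ 2 with hc2
    set c3 : ℝ := 5 * a ^ 2 - 1 / 16 with hc3
    have d1 : HasDerivAt (fun y : ℝ => y ^ c1) (c1 * x ^ (c1 - 1)) x :=
      Real.hasDerivAt_rpow_const (Or.inl h0.ne')
    have d2 := ((hasDerivAt_id x).sub_const 1).rpow_const (p := c1) (Or.inl h1.ne')
    have d3 := ((hasDerivAt_id x).add_const 1).rpow_const (p := c2) (Or.inl h2.ne')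
    have d4 := ((hasDerivAt_id x).const_sub 2).rpow_const (p := c2) (Or.inl h3.ne')
    have d5 := (((hasDerivAt_id x).const_mul 2).sub_const 1).rpow_const (p := c3)
      (Or.inl h4.ne')
    have hprod := (((d1.mul d2).mul d3).mul d4).mul d5
    have hval : (0 : ℝ) <
        x ^ c1 * (x - 1) ^ c1 * (x + 1) ^ c2 * (2 - x) ^ c2 * (2 * x - 1) ^ c3 := by
      have := Real.rpow_pos_of_pos h0 c1
      have := Real.rpow_pos_of_pos h1 c1
      have := Real.rpow_pos_of_pos h2 c2
      have := Real.rpow_pos_of_pos h3 c2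
      have := Real.rpow_pos_of_pos h4 c3
      positivity
    have hT : HasDerivAt (fun y : ℝ =>
        y ^ c1 * (y - 1) ^ c1 * (y + 1) ^ c2 * (2 - y) ^ c2 * (2 * y - 1) ^ c3)
        ((x ^ c1 * (x - 1) ^ c1 * (x + 1) ^ c2 * (2 - x) ^ c2 * (2 * x - 1) ^ c3) *
          PVI_L a x) x := by
      refine hprod.congr_deriv ?_
      simp only [id_eq, Pi.mul_apply, Pi.add_apply, Pi.pow_apply, Pi.neg_apply, Pi.sub_apply]
      rw [Real.rpow_sub_one h0.ne', Real.rpow_sub_one h1.ne', Real.rpow_sub_one h2.ne',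
        Real.rpow_sub_one h3.ne', Real.rpow_sub_one h4.ne']
      unfold PVI_L
      rw [show (10 : ℝ) * a ^ 2 - 1 / 8 = 2 * c3 by rw [hc3]; ring]
      rw [← hc1, ← hc2]
      field_simp
      ring
    have hτ' : HasDerivAt τ
        ((x ^ c1 * (x - 1) ^ c1 * (x + 1) ^ c2 * (2 - x) ^ c2 * (2 * x - 1) ^ c3) *
          PVI_L a x) x :=
      hT.congr_of_eventuallyEq (Filter.eventuallyEq_of_mem (hIopen.mem_nhds hx) hτ)
    rw [hτ'.deriv, hτ x hx]
    exact mul_div_cancel_left₀ _ hval.ne'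
  -- closed form of σ on the interval
  have hσG : ∀ x ∈ Ioo (1 : ℝ) 2, σ x = PVI_G a x := by
    intro x hx
    have hx1 : (1 : ℝ) < x := hx.1
    have hx2 : x < 2 := hx.2
    have h0 : x ≠ 0 := ne_of_gt (by linarith)
    have h1 : x - 1 ≠ 0 := ne_of_gt (by linarith)
    have h2 : x + 1 ≠ 0 := ne_of_gt (by linarith)
    have h3 : 2 - x ≠ 0 := ne_of_gt (by linarith)
    have h4 : 2 * x - 1 ≠ 0 := ne_of_gt (by linarith)
    have h4' : x * 2 - 1 ≠ 0 := by rwa [mul_comm]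
    rw [hσ x, hLτ x hx, hderiv_tf x hx, htf x hx]
    unfold PVI_L PVI_Dt PVI_G
    field_simp
    ring
  -- derivative of the closed form of σ
  have hG' : ∀ x ∈ Ioo (1 : ℝ) 2, HasDerivAt (PVI_G a) (PVI_Gd a x) x := by
    intro x hx
    have hx1 : (1 : ℝ) < x := hx.1
    have h4 : 2 * x - 1 ≠ 0 := ne_of_gt (by linarith)
    have h4' : x * 2 - 1 ≠ 0 := by rwa [mul_comm]
    have hnum := ((((hasDerivAt_const x (1 / 36 - 2 * a ^ 2)).add
        ((hasDerivAt_id x).const_mul (-1 / 18 + 4 * a ^ 2))).add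
        ((hasDerivAt_pow 2 x).const_mul (1 / 48 - 3 * a ^ 2))).add
        ((hasDerivAt_pow 3 x).const_mul (5 / 72 - 2 * a ^ 2))).add
        ((hasDerivAt_pow 4 x).const_mul (-5 / 144 + a ^ 2))
    have hden := ((hasDerivAt_id x).const_mul (2 : ℝ)).sub_const 1
    have h := hnum.div hden h4
    unfold PVI_G PVI_Gd
    refine h.congr_deriv ?_
    simp only [id_eq, Pi.mul_apply, Pi.add_apply, Pi.pow_apply, Pi.neg_apply, Pi.sub_apply]
    field_simp
    ring
  have hderiv_σ : ∀ x ∈ Ioo (1 : ℝ) 2, deriv σ x = PVI_Gd a x := by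
    intro x hx
    exact ((hG' x hx).congr_of_eventuallyEq
      (Filter.eventuallyEq_of_mem (hIopen.mem_nhds hx) hσG)).deriv
  -- closed form of σ'/tf'
  have hHfun : ∀ x ∈ Ioo (1 : ℝ) 2, deriv σ x / deriv tf x = PVI_H a x := by
    intro x hx
    have hx1 : (1 : ℝ) < x := hx.1
    have h0 : x ≠ 0 := ne_of_gt (by linarith)
    have h1 : x - 1 ≠ 0 := ne_of_gt (by linarith)
    have h4 : 2 * x - 1 ≠ 0 := ne_of_gt (by linarith)
    have h4' : x * 2 - 1 ≠ 0 := by rwa [mul_comm]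
    rw [hderiv_σ x hx, hderiv_tf x hx]
    unfold PVI_Gd PVI_Dt PVI_H
    field_simp
  intro s hs hne
  have hs1 : (1 : ℝ) < s := hs.1
  have hs2 : s < 2 := hs.2
  have h0 : s ≠ 0 := ne_of_gt (by linarith)
  have h1 : s - 1 ≠ 0 := ne_of_gt (by linarith)
  have h2 : s + 1 ≠ 0 := ne_of_gt (by linarith)
  have h3 : 2 - s ≠ 0 := ne_of_gt (by linarith)
  have h4 : 2 * s - 1 ≠ 0 := ne_of_gt (by linarith)
  have h4' : s * 2 - 1 ≠ 0 := by rwa [mul_comm]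
  -- derivative of σ'/tf' at s
  have hH' : HasDerivAt (PVI_H a) (PVI_Hd a s) s := by
    have hnum := (((((hasDerivAt_id s).const_mul (-1 / 24 + 6 * a ^ 2)).add
        ((hasDerivAt_pow 2 s).const_mul (-1 / 6))).add
        ((hasDerivAt_pow 3 s).const_mul (5 / 12 - 12 * a ^ 2))).add
        ((hasDerivAt_pow 4 s).const_mul (-5 / 24 + 6 * a ^ 2))).neg
    have hden := ((hasDerivAt_pow 2 s).const_mul (6 : ℝ)).mul
      (((hasDerivAt_id s).sub_const 1).pow 2)
    have hden0 : 6 * s ^ 2 * (s - 1) ^ 2 ≠ 0 := by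
      have hs0 : (0 : ℝ) < s := by linarith
      have hs1' : (0 : ℝ) < s - 1 := by linarith
      positivity
    have h := hnum.div hden hden0
    unfold PVI_H PVI_Hd
    refine h.congr_deriv ?_
    simp only [id_eq, Pi.mul_apply, Pi.add_apply, Pi.pow_apply, Pi.neg_apply, Pi.sub_apply]
    field_simp
    ring
  have e4 : deriv (fun x => deriv σ x / deriv tf x) s = PVI_Hd a s := by
    exact (hH'.congr_of_eventuallyEq
      (Filter.eventuallyEq_of_mem (hIopen.mem_nhds hs) hHfun)).deriv
  -- reduced closed forms of the matrix entries
  have hr1 : s ^ 3 * (2 - s) / (2 * s - 1) * PVI_H a s - PVI_G a s =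
      ((-1 / 36 + 2 * a ^ 2) + (1 / 36 - 2 * a ^ 2) * s + (-1 / 144 + a ^ 2) * s ^ 2) /
        (s - 1) := by
    unfold PVI_H PVI_G
    field_simp
    ring
  have hr2 : (s ^ 3 * (2 - s) / (2 * s - 1) - 1) * PVI_H a s - PVI_G a s =
      ((-1 / 144 + a ^ 2) + (-1 / 72) * s + (-1 / 144 + a ^ 2) * s ^ 2) / s := by
    unfold PVI_H PVI_G
    field_simp
    ring
  have hrc : PVI_H a s + a ^ 2 + a ^ 2 + a ^ 2 - (1 / 4 : ℝ) ^ 2 =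
      ((-1 / 144 + a ^ 2) + (1 / 36 - 2 * a ^ 2) * s + (-1 / 36 + 2 * a ^ 2) * s ^ 2) /
        (s * (s - 1)) := by
    unfold PVI_H
    field_simp
    ring
  have hlf : s ^ 3 * (2 - s) / (2 * s - 1) * (s ^ 3 * (2 - s) / (2 * s - 1) - 1) *
      (PVI_Hd a s / PVI_Dt s) =
      ((-1 / 432 + a ^ 2 / 3) + (1 / 288 - a ^ 2 / 2) * s + (1 / 288 - a ^ 2 / 2) * s ^ 2 +
        (-1 / 432 + a ^ 2 / 3) * s ^ 3) / (s * (s - 1)) := by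
    unfold PVI_Hd PVI_Dt
    field_simp
    ring
  -- put everything together
  simp only [Matrix.det_fin_three, Matrix.of_apply, Matrix.cons_val', Matrix.cons_val_zero, Matrix.cons_val_one,
    Matrix.head_cons, Matrix.empty_val', Matrix.cons_val_fin_one, Matrix.head_fin_const,
    Matrix.cons_val_two, Matrix.tail_cons]
  rw [htf s hs, hσG s hs, hHfun s hs, e4, hderiv_tf s hs]
  rw [hlf, hr1, hr2, hrc]
  field_simp
  ring
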